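/- The map assigning to noise power σ² > 0 the value 1/log₂(1 + S/(I·x + σ²)) is concave in σ² for fixed constants S, I, x ≥ 0 with S > 0, hence satisfies scalability: α·F(σ²) > F(α·σ²) for α > 1 when F(σ²) > 0. -/

import Mathlib

open Real Set Filter Topology

lemma key_log (r : ℝ) (hr : 1 < r) : 2 * (r - 1) < (1 + r) * Real.log r := by
  have hmono : StrictMonoOn (fun s : ℝ => (1 + s) * Real.log s - 2 * (s - 1)) (Ici 1) := by
    apply strictMonoOn_of_deriv_pos (convex_Ici 1)
    · apply ContinuousOn.sub
      · exact (continuousOn_const.add continuousOn_id).mul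
          (Real.continuousOn_log.mono (fun s hs => by simp only [mem_Ici] at hs; simp; linarith))
      · fun_prop
    · intro s hs
      rw [interior_Ici] at hs
      have hs1 : (1:ℝ) < s := hs
      have hs0 : (0:ℝ) < s := by linarith
      have hd : HasDerivAt (fun s : ℝ => (1 + s) * Real.log s - 2 * (s - 1))
          (Real.log s + (1 + s) * s⁻¹ - 2) s := by
        have h1 : HasDerivAt (fun s : ℝ => (1 + s) * Real.log s)
            (1 * Real.log s + (1 + s) * s⁻¹) s :=
          (((hasDerivAt_id s).const_add 1)).mul (Real.hasDerivAt_log hs0.ne')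
        have h2 : HasDerivAt (fun s : ℝ => 2 * (s - 1)) 2 s := by
          simpa using ((hasDerivAt_id s).sub_const 1).const_mul 2
        refine (h1.sub h2).congr_deriv ?_
        ring
      rw [hd.deriv]
      have hlog : Real.log s⁻¹ < s⁻¹ - 1 :=
        Real.log_lt_sub_one_of_pos (by positivity) (by
          intro h
          exact hs1.ne' (by simpa using congrArg (·⁻¹) h))
      rw [Real.log_inv] at hlog
      have : (1 + s) * s⁻¹ = 1 + s⁻¹ := by field_simp; ring
      rw [this]
      linarith
  have h := hmono (self_mem_Ici) (mem_Ici.2 hr.le) hr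
  simp only [Real.log_one] at h
  linarith

lemma key_ab (a b : ℝ) (ha : 0 < a) (hab : a < b) :
    2 * (b - a) < (a + b) * (Real.log b - Real.log a) := by
  have hb : 0 < b := lt_trans ha hab
  have hr : 1 < b / a := (one_lt_div ha).2 hab
  have h := key_log (b / a) hr
  rw [Real.log_div hb.ne' ha.ne'] at h
  have h2 := mul_lt_mul_of_pos_left h ha
  have e1 : a * (2 * (b / a - 1)) = 2 * (b - a) := by field_simp
  have e2 : a * ((1 + b / a) * (Real.log b - Real.log a))
      = (a + b) * (Real.log b - Real.log a) := by field_simp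
  linarith [e1 ▸ e2 ▸ h2]

set_option maxHeartbeats 800000

lemma numer_eq (l2 l a b s : ℝ) (ha : a ≠ 0) (hb : b ≠ 0) :
    -(l2 * (-1 / b ^ 2 - -1 / a ^ 2)) * l ^ 2 -
      -(l2 * (-s / (a * b))) * (2 * l ^ 1 * (-s / (a * b)))
    = l2 * l * (2 * s ^ 2 - l * (b ^ 2 - a ^ 2)) / (a ^ 2 * b ^ 2) := by
  field_simp
  ring


lemma aux_strictConcave (c S : ℝ) (hc : 0 ≤ c) (hS : 0 < S) :
    StrictConcaveOn ℝ (Ioi (0:ℝ)) (fun t : ℝ => 1 / Real.logb 2 (1 + S / (c + t))) := by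
  set L : ℝ → ℝ := fun t => Real.log (c + t + S) - Real.log (c + t) with hLdef
  set M : ℝ → ℝ := fun t => (c + t + S)⁻¹ - (c + t)⁻¹ with hMdef
  set G : ℝ → ℝ := fun t => Real.log 2 / L t with hGdef
  set G' : ℝ → ℝ := fun t => -(Real.log 2 * M t) / (L t) ^ 2 with hG'def
  have ha : ∀ t : ℝ, 0 < t → 0 < c + t := fun t ht => add_pos_of_nonneg_of_pos hc ht
  have hb : ∀ t : ℝ, 0 < t → 0 < c + t + S := fun t ht => by have := ha t ht; linarith
  have hL : ∀ t : ℝ, 0 < t → 0 < L t := fun t ht =>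
    sub_pos.2 (Real.log_lt_log (ha t ht) (by linarith))
  -- derivative of L
  have hderivL : ∀ t : ℝ, 0 < t → HasDerivAt L (M t) t := by
    intro t ht
    have h1 : HasDerivAt (fun t : ℝ => c + t + S) 1 t := by
      simpa using ((hasDerivAt_id t).const_add c).add_const S
    have h2 : HasDerivAt (fun t : ℝ => c + t) 1 t := (hasDerivAt_id t).const_add c
    have hl1 : HasDerivAt (fun t : ℝ => Real.log (c + t + S)) ((c + t + S)⁻¹) t := by
      simpa [Function.comp_def] using (Real.hasDerivAt_log (hb t ht).ne').comp t h1
    have hl2 : HasDerivAt (fun t : ℝ => Real.log (c + t)) ((c + t)⁻¹) t := by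
      simpa [Function.comp_def] using (Real.hasDerivAt_log (ha t ht).ne').comp t h2
    exact hl1.sub hl2
  -- derivative of G
  have hderivG : ∀ t : ℝ, 0 < t → HasDerivAt G (G' t) t := by
    intro t ht
    have h := (hasDerivAt_const t (Real.log 2)).div (hderivL t ht) (hL t ht).ne'
    refine h.congr_deriv ?_
    simp [hG'def]
  -- strict concavity of G
  have hGconc : StrictConcaveOn ℝ (Ioi (0:ℝ)) G := by
    apply strictConcaveOn_of_deriv2_neg (convex_Ioi 0)
    · apply ContinuousOn.div continuousOn_const
      · apply ContinuousOn.sub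
        · exact Real.continuousOn_log.comp (by fun_prop)
            (fun t ht => by simp [(hb t ht).ne'])
        · exact Real.continuousOn_log.comp (by fun_prop)
            (fun t ht => by simp [(ha t ht).ne'])
      · exact fun t ht => (hL t ht).ne'
    · intro t ht
      rw [interior_Ioi] at ht
      have ht : (0:ℝ) < t := ht
      show deriv (deriv (deriv^[0] G)) t < 0
      simp only [Function.iterate_zero, id]
      have hev : deriv G =ᶠ[𝓝 t] G' := by
        filter_upwards [Ioi_mem_nhds ht] with u hu using (hderivG u hu).deriv
      rw [hev.deriv_eq]
      -- second derivative value
      set a := c + t with hadef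
      set b := c + t + S with hbdef
      have ha0 : 0 < a := ha t ht
      have hb0 : 0 < b := hb t ht
      have hL0 : 0 < L t := hL t ht
      have hM' : HasDerivAt M (-1 / b ^ 2 - (-1 / a ^ 2)) t := by
        have h1 : HasDerivAt (fun t : ℝ => c + t + S) 1 t := by
          simpa using ((hasDerivAt_id t).const_add c).add_const S
        have h2 : HasDerivAt (fun t : ℝ => c + t) 1 t := (hasDerivAt_id t).const_add c
        have i1 : HasDerivAt (fun t : ℝ => (c + t + S)⁻¹) (-1 / b ^ 2) t := by
          exact h1.inv hb0.ne'
        have i2 : HasDerivAt (fun t : ℝ => (c + t)⁻¹) (-1 / a ^ 2) t := by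
          exact h2.inv ha0.ne'
        exact i1.sub i2
      have hnum : HasDerivAt (fun u => -(Real.log 2 * M u))
          (-(Real.log 2 * (-1 / b ^ 2 - (-1 / a ^ 2)))) t := ((hM'.const_mul (Real.log 2))).neg
      have hden : HasDerivAt (fun u => (L u) ^ 2) (2 * L t ^ 1 * M t) t :=
        (hderivL t ht).pow 2
      have hG'' := hnum.div hden (pow_ne_zero 2 hL0.ne')
      rw [show deriv G' t = _ from hG''.deriv]
      apply div_neg_of_neg_of_pos
      · -- numerator negative
        have hkey := key_ab a b ha0 (by simp [hadef, hbdef]; linarith)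
        have hMval : M t = -S / (a * b) := by
          simp only [hMdef]
          rw [← hadef, ← hbdef]
          field_simp
          ring
        rw [hMval, numer_eq _ _ _ _ _ ha0.ne' hb0.ne']
        have h2pos : 0 < Real.log 2 := Real.log_pos one_lt_two
        have hbma : b - a = S := by simp [hadef, hbdef]
        have hLab : Real.log b - Real.log a = L t := rfl
        rw [hLab, hbma] at hkey
        have hneg : 2 * S ^ 2 - L t * (b ^ 2 - a ^ 2) < 0 := by nlinarith [mul_lt_mul_of_pos_left hkey hS, sq_nonneg (b - a)]
        have hpos1 : 0 < Real.log 2 * L t := by positivity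
        apply div_neg_of_neg_of_pos _ (by positivity)
        nlinarith
      · positivity
  -- transfer to F
  have hFG : ∀ t : ℝ, t ∈ Ioi (0:ℝ) → 1 / Real.logb 2 (1 + S / (c + t)) = G t := by
    intro t ht
    have ht : (0:ℝ) < t := ht
    have harg : 1 + S / (c + t) = (c + t + S) / (c + t) := by field_simp
    rw [harg, Real.logb, Real.log_div (hb t ht).ne' (ha t ht).ne', one_div_div]
  refine ⟨convex_Ioi 0, fun p hp q hq hpq u v hu hv huv => ?_⟩
  have hmem : u • p + v • q ∈ Ioi (0:ℝ) := (convex_Ioi 0) hp hq hu.le hv.le huv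
  simp only []
  rw [hFG p hp, hFG q hq, hFG _ hmem]
  exact hGconc.2 hp hq hpq hu hv huv

lemma scalable_of_strictConcave (f : ℝ → ℝ) (hf : StrictConcaveOn ℝ (Ioi (0:ℝ)) f)
    (hpos : ∀ t : ℝ, 0 < t → 0 < f t) :
    ∀ α : ℝ, 1 < α → ∀ t : ℝ, 0 < t → f (α * t) < α * f t := by
  have nonstrict : ∀ α : ℝ, 1 < α → ∀ s : ℝ, 0 < s → f (α * s) ≤ α * f s := by
    intro α hα s hs
    have hαs : 0 < α * s := by positivity
    have hstep : ∀ ε ∈ Ioo (0:ℝ) s, f (α * s) * (s - ε) ≤ f s * (α * s - ε) := by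
      intro ε hε
      obtain ⟨hε0, hεs⟩ := hε
      have h1 : (0:ℝ) < α * s - ε := by nlinarith
      set lam := (s - ε) / (α * s - ε) with hlam
      have hlam0 : 0 ≤ lam := div_nonneg (by linarith) h1.le
      have hlam1 : 0 ≤ 1 - lam := by
        have : lam ≤ 1 := (div_le_one h1).2 (by nlinarith)
        linarith
      have hcomb := hf.concaveOn.2 (mem_Ioi.2 hαs) (mem_Ioi.2 hε0) hlam0 hlam1 (by ring)
      have hval : lam • (α * s) + (1 - lam) • ε = s := by
        simp only [smul_eq_mul, hlam]
        rw [one_sub_div h1.ne', div_mul_eq_mul_div, div_mul_eq_mul_div, ← add_div, div_eq_iff h1.ne']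
        ring
      rw [hval] at hcomb
      simp only [smul_eq_mul] at hcomb
      have hfε : 0 < f ε := hpos ε hε0
      have h2 : lam * f (α * s) ≤ f s := by nlinarith
      have h3 := mul_le_mul_of_nonneg_right h2 h1.le
      calc f (α * s) * (s - ε) = lam * f (α * s) * (α * s - ε) := by
            rw [hlam]; field_simp
        _ ≤ f s * (α * s - ε) := h3
    have c1 : Continuous (fun ε : ℝ => f (α * s) * (s - ε)) := by fun_prop
    have c2 : Continuous (fun ε : ℝ => f s * (α * s - ε)) := by fun_prop
    have t1 : Tendsto (fun ε : ℝ => f (α * s) * (s - ε)) (𝓝[>] (0:ℝ))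
        (𝓝 (f (α * s) * s)) := by
      have := (c1.tendsto 0).mono_left (nhdsWithin_le_nhds (s := Ioi (0:ℝ)))
      simpa using this
    have t2 : Tendsto (fun ε : ℝ => f s * (α * s - ε)) (𝓝[>] (0:ℝ))
        (𝓝 (f s * (α * s))) := by
      have := (c2.tendsto 0).mono_left (nhdsWithin_le_nhds (s := Ioi (0:ℝ)))
      simpa using this
    have hev : ∀ᶠ ε in 𝓝[>] (0:ℝ), f (α * s) * (s - ε) ≤ f s * (α * s - ε) :=
      eventually_of_mem (Ioo_mem_nhdsGT_of_mem ⟨le_refl 0, hs⟩) hstep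
    have hle : f (α * s) * s ≤ f s * (α * s) := le_of_tendsto_of_tendsto t1 t2 hev
    have := (mul_le_mul_iff_of_pos_right hs).1 (by nlinarith : f (α * s) * s ≤ (α * f s) * s)
    exact this
  intro α hα t ht
  have htα : 0 < t / α := by positivity
  have hα0 : (0:ℝ) < α := by linarith
  have h1 : f t ≤ α * f (t / α) := by
    have := nonstrict α hα (t / α) htα
    rwa [mul_div_cancel₀ t hα0.ne'] at this
  have hlt1 : t / α < t := by rw [div_lt_iff₀ hα0]; nlinarith
  have hlt2 : t < α * t := by nlinarith
  have hne : α * t ≠ t / α := by intro h; rw [h] at hlt2; linarith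
  have hcomb := hf.2 (mem_Ioi.2 (by positivity : (0:ℝ) < α * t)) (mem_Ioi.2 htα) hne
    (by positivity : (0:ℝ) < 1 / (α + 1)) (by positivity : (0:ℝ) < α / (α + 1))
    (by field_simp; ring)
  have hval : (1 / (α + 1)) • (α * t) + (α / (α + 1)) • (t / α) = t := by
    simp only [smul_eq_mul]
    field_simp
  rw [hval] at hcomb
  simp only [smul_eq_mul] at hcomb
  have hA : 0 < 1 / (α + 1) := by positivity
  have h4 : (α / (α + 1)) * f (t / α) ≥ (1 / (α + 1)) * f t := by
    have : α / (α + 1) * f (t / α) = 1 / (α + 1) * (α * f (t / α)) := by ring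
    rw [this]
    exact mul_le_mul_of_nonneg_left h1 hA.le
  have h5 : 1 / (α + 1) * f (α * t) + 1 / (α + 1) * f t < f t := by linarith
  have hα1 : (0:ℝ) < α + 1 := by linarith
  have h6 : f (α * t) + f t < (α + 1) * f t := by
    have hm := mul_lt_mul_of_pos_left h5 hα1
    calc f (α * t) + f t
        = (α + 1) * (1 / (α + 1) * f (α * t) + 1 / (α + 1) * f t) := by
          field_simp
        _ < (α + 1) * f t := hm
  linarith

theorem noise_map_concave_and_scalable (S I x : ℝ) (hS : 0 < S) (hI : 0 ≤ I)
    (hx : 0 ≤ x) :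
    ConcaveOn ℝ (Set.Ioi (0 : ℝ))
      (fun t : ℝ => 1 / Real.logb 2 (1 + S / (I * x + t))) ∧
    (∀ α > (1 : ℝ), ∀ t > (0 : ℝ),
      0 < 1 / Real.logb 2 (1 + S / (I * x + t)) →
      1 / Real.logb 2 (1 + S / (I * x + α * t)) <
        α * (1 / Real.logb 2 (1 + S / (I * x + t)))) := by
  have hc : 0 ≤ I * x := mul_nonneg hI hx
  have hsc := aux_strictConcave (I * x) S hc hS
  have hpos : ∀ t : ℝ, 0 < t →
      0 < (fun t : ℝ => 1 / Real.logb 2 (1 + S / (I * x + t))) t := by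
    intro t ht
    have h1 : 0 < I * x + t := add_pos_of_nonneg_of_pos hc ht
    have h2 : (1:ℝ) < 1 + S / (I * x + t) := by
      have : 0 < S / (I * x + t) := by positivity
      linarith
    exact one_div_pos.2 (Real.logb_pos (by norm_num) h2)
  refine ⟨hsc.concaveOn, fun α hα t ht _ => ?_⟩
  exact scalable_of_strictConcave _ hsc hpos α hα t ht
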